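/- arXiv:2505.05594 — 7 statements merged into one kernel-verified Lean document; each statement's English description precedes it below -/
import Mathlib

section
/- For every feature x < θ with T_M(θ − x) ≤ C_I − C_M, the agent prefers manipulation to improvement: u_M(x) ≥ u_I(x). In particular, if r = θ − T_M⁻¹(C_I − C_M) > 0 and T_M is continuous, then u_M(x) ≥ u_I(x) for all x ∈ [r, θ). -/
noncomputable section

open Set

/-- Generalized inverse (quantile function) of a CDF. -/
def ginv (T : ℝ → ℝ) (p : ℝ) : ℝ := sInf {b : ℝ | p ≤ T b}

/-- `T` is a boost CDF with minimum boost `blo` and maximum boost `bhi`. -/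
structure IsBoostCDF (T : ℝ → ℝ) (blo bhi : ℝ) : Prop where
  continuous : Continuous T
  mono : Monotone T
  nonneg : ∀ b, 0 ≤ T b
  le_one : ∀ b, T b ≤ 1
  eq_zero : ∀ b, b ≤ blo → T b = 0
  eq_one : ∀ b, bhi ≤ b → T b = 1

/-- Agent's utility from a costly action with boost CDF `T`, cost `C`, threshold `θ`,
at feature `x`.  (The utility of doing nothing is `0`.) -/
def util (T : ℝ → ℝ) (C θ x : ℝ) : ℝ := if x < θ then (1 - T (θ - x)) - C else -C

/-- Opt-in feature for an action with boost CDF `T`, cost `C`, and threshold `θ`. -/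
def optIn (T : ℝ → ℝ) (C θ : ℝ) : ℝ := max 0 (θ - ginv T (1 - C))

/-- Risk-taker feature. -/
def riskTaker (TM : ℝ → ℝ) (CM CI θ : ℝ) : ℝ := max 0 (θ - ginv TM (CI - CM))

/-- Flip features: features at which the agent is indifferent between `M` and `I`. -/
def IsFlip (TM TI : ℝ → ℝ) (CM CI θ bMhi bIlo f : ℝ) : Prop :=
  f ∈ Icc (θ - bMhi) (θ - bIlo) ∧ TM (θ - f) - TI (θ - f) = CI - CM

/-- Risk takers prefer manipulation: whenever `T_M(θ - x) ≤ C_I - C_M`, manipulation is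
(weakly) preferred to improvement; in particular this holds on `[r, θ)` when
`r = θ - T_M⁻¹(C_I - C_M) > 0`. -/
theorem risk_takers_prefer_manipulation
    (TM TI : ℝ → ℝ) (bMlo bMhi bIlo bIhi CM CI θ : ℝ)
    (hTM : IsBoostCDF TM bMlo bMhi) (hTI : IsBoostCDF TI bIlo bIhi)
    (hFOSD : ∀ b, TI b ≤ TM b)
    (hCM : 0 ≤ CM) (hCMI : CM ≤ CI) (hCI : CI < 1)
    (hθpos : 0 < θ) :
    (∀ x, 0 ≤ x → x < θ → TM (θ - x) ≤ CI - CM →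
        util TI CI θ x ≤ util TM CM θ x)
    ∧ (0 < θ - ginv TM (CI - CM) →
        ∀ x, θ - ginv TM (CI - CM) ≤ x → x < θ →
          util TI CI θ x ≤ util TM CM θ x) := by
  have key : ∀ x, 0 ≤ x → x < θ → TM (θ - x) ≤ CI - CM →
      util TI CI θ x ≤ util TM CM θ x := by
    intro x hx hxθ hT
    simp only [util, if_pos hxθ]
    have h0 := hTI.nonneg (θ - x)
    linarith
  refine ⟨key, ?_⟩
  intro hg x hrx hxθ
  refine key x (by linarith) hxθ ?_
  by_contra hc
  push_neg at hc
  set p := CI - CM with hp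
  set S := {b : ℝ | p ≤ TM b} with hS
  have hmem : θ - x ∈ S := le_of_lt hc
  have hbdd : BddBelow S := by
    by_contra hnb
    have h0 : ginv TM p = 0 := Real.sInf_of_not_bddBelow hnb
    rw [h0] at hrx
    linarith
  have hle : ginv TM p ≤ θ - x := csInf_le hbdd hmem
  have heq : ginv TM p = θ - x := le_antisymm hle (by linarith)
  have hgp : p < TM (ginv TM p) := by rw [heq]; exact hc
  have hopen : IsOpen {b : ℝ | p < TM b} := isOpen_lt continuous_const hTM.continuous
  have hnhds : {b : ℝ | p < TM b} ∈ nhds (ginv TM p) := hopen.mem_nhds hgp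
  obtain ⟨ε, hε, hball⟩ := Metric.mem_nhds_iff.mp hnhds
  have hb : ginv TM p - ε / 2 ∈ S := by
    have : ginv TM p - ε / 2 ∈ Metric.ball (ginv TM p) ε := by
      simp only [Metric.mem_ball, Real.dist_eq]
      rw [abs_lt]
      constructor <;> linarith
    exact le_of_lt (show p < TM _ from hball this)
  have := csInf_le hbdd hb
  have : ginv TM p ≤ ginv TM p - ε / 2 := this
  linarith
end
end

section
/- Let G : ℝ → [0,∞) be continuous, let T_I be a boost CDF that is continuously differentiable with density τ_I and satisfies T_I(b) = 0 for b ≤ b̲_I, and let 0 ≤ C_M < C_I < 1. For θ with o_I(θ) := θ − T_I⁻¹(1 − C_I) > 0 and r(θ) := θ − T_M⁻¹(C_I − C_M) > o_I(θ), define the improvement impact Φ(θ) = ∫_{o_I(θ)}^{r(θ)} G(z) (1 − T_I(θ − z)) dz. If T_M⁻¹(C_I − C_M) ≤ b̲_I (acceptance under improvement is certain at r), then Φ is differentiable at θ with Φ'(θ) = G(r(θ)) − C_I · G(o_I(θ)) − ∫_{o_I(θ)}^{r(θ)} G(z) τ_I(θ − z) dz. -/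
noncomputable section

open Set MeasureTheory intervalIntegral

-- aux: value of T at its ginv
lemma ginv_spec (T : ℝ → ℝ) (blo bhi p : ℝ) (hT : IsBoostCDF T blo bhi)
    (hp0 : 0 < p) (hp1 : p ≤ 1) : T (ginv T p) = p := by
  set S : Set ℝ := {b : ℝ | p ≤ T b} with hS
  have hclosed : IsClosed S := isClosed_le continuous_const hT.continuous
  have hne : S.Nonempty := ⟨bhi, by simpa [S, hT.eq_one bhi le_rfl] using hp1⟩
  have hbdd : BddBelow S := by
    refine ⟨blo, fun x hx => ?_⟩
    by_contra h
    push_neg at h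
    have h0 := hT.eq_zero x h.le
    have : p ≤ 0 := by simpa [S, h0] using hx
    linarith
  have hmem : ginv T p ∈ S := hclosed.csInf_mem hne hbdd
  have hge : p ≤ T (ginv T p) := hmem
  refine le_antisymm ?_ hge
  by_contra h
  push_neg at h
  -- T (ginv T p) > p, by continuity some x < ginv T p has T x ≥ p
  have hopen : IsOpen {x | p < T x} := isOpen_lt continuous_const hT.continuous
  obtain ⟨ε, hε, hball⟩ := Metric.isOpen_iff.1 hopen _ h
  have hx : ginv T p - ε / 2 ∈ S := by
    have hmem2 : ginv T p - ε/2 ∈ {x | p < T x} := by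
      apply hball
      simp only [Metric.mem_ball, Real.dist_eq]
      rw [show ginv T p - ε/2 - ginv T p = -(ε/2) by ring, abs_neg, abs_of_pos (by linarith)]
      linarith
    have hlt : p < T (ginv T p - ε/2) := hmem2
    exact hlt.le
  have hle := csInf_le hbdd hx
  have : ginv T p ≤ ginv T p - ε / 2 := hle
  linarith

/-- Leibniz rule for the improvement impact (Type 1):
`Φ(θ) = ∫_{o_I(θ)}^{r(θ)} G(z)(1 - T_I(θ - z)) dz` with `o_I(θ) = θ - T_I⁻¹(1 - C_I)` and
`r(θ) = θ - T_M⁻¹(C_I - C_M)`; if acceptance under improvement is certain at `r`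
(`T_M⁻¹(C_I - C_M) ≤ b̲_I`), then
`Φ'(θ) = G(r(θ)) - C_I G(o_I(θ)) - ∫_{o_I(θ)}^{r(θ)} G(z) τ_I(θ - z) dz`. -/
theorem improvement_impact_deriv
    (G TM TI τI : ℝ → ℝ) (bIlo bIhi CM CI θ : ℝ)
    (hG : Continuous G)
    (hTI : IsBoostCDF TI bIlo bIhi)
    (hτI : Continuous τI)
    (hTI' : ∀ b, HasDerivAt TI (τI b) b)
    (hCM : 0 ≤ CM) (hCC : CM < CI) (hCI : CI < 1)
    (hoI : 0 < θ - ginv TI (1 - CI))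
    (hr : θ - ginv TI (1 - CI) < θ - ginv TM (CI - CM))
    (hcert : ginv TM (CI - CM) ≤ bIlo) :
    HasDerivAt
      (fun t => ∫ z in (t - ginv TI (1 - CI))..(t - ginv TM (CI - CM)),
        G z * (1 - TI (t - z)))
      (G (θ - ginv TM (CI - CM)) - CI * G (θ - ginv TI (1 - CI))
        - ∫ z in (θ - ginv TI (1 - CI))..(θ - ginv TM (CI - CM)), G z * τI (θ - z))
      θ := by
  set a := ginv TI (1 - CI) with ha
  set b := ginv TM (CI - CM) with hb
  have hTIa : TI a = 1 - CI := ginv_spec TI bIlo bIhi (1 - CI) hTI (by linarith) (by linarith)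
  have hTIb : TI b = 0 := hTI.eq_zero b hcert
  set K : ℝ → ℝ := fun z => ∫ s in (0:ℝ)..z, G s with hKdef
  have hK : ∀ z, HasDerivAt K (G z) z := fun z => (hG.integral_hasStrictDerivAt 0 z).hasDerivAt
  have hKcont : Continuous K := by
    rw [continuous_iff_continuousAt]; exact fun z => (hK z).continuousAt
  have key : ∀ t : ℝ, (∫ z in (t - a)..(t - b), G z * (1 - TI (t - z)))
      = K (t - b) - CI * K (t - a) - ∫ u in b..a, τI u * K (t - u) := by
    intro t
    have hu : ∀ x ∈ uIcc (t - a) (t - b), HasDerivAt (fun x => 1 - TI (t - x)) (τI (t - x)) x := by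
      intro x _
      have h1 : HasDerivAt (fun x : ℝ => t - x) (-1) x := (hasDerivAt_id x).const_sub t
      have h2 : HasDerivAt (fun x => TI (t - x)) (τI (t - x) * (-1)) x := (hTI' (t - x)).comp x h1
      have h3 := h2.const_sub 1
      simpa using h3
    have hv : ∀ x ∈ uIcc (t - a) (t - b), HasDerivAt K (G x) x := fun x _ => hK x
    have hτint : IntervalIntegrable (fun z => τI (t - z)) volume (t - a) (t - b) :=
      (hτI.comp (continuous_const.sub continuous_id)).intervalIntegrable _ _
    have hGint : IntervalIntegrable G volume (t - a) (t - b) := hG.intervalIntegrable _ _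
    have ibp := intervalIntegral.integral_mul_deriv_eq_deriv_mul hu hv hτint hGint
    have hsub : (∫ z in (t - a)..(t - b), τI (t - z) * K z) = ∫ u in b..a, τI u * K (t - u) := by
      have h := intervalIntegral.integral_comp_sub_left (a := t - a) (b := t - b)
        (fun y => τI y * K (t - y)) t
      simp only [sub_sub_cancel] at h
      exact h
    calc (∫ z in (t - a)..(t - b), G z * (1 - TI (t - z)))
        = ∫ z in (t - a)..(t - b), (1 - TI (t - z)) * G z :=
          intervalIntegral.integral_congr fun z _ => mul_comm _ _
      _ = K (t - b) - CI * K (t - a) - ∫ u in b..a, τI u * K (t - u) := by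
          rw [ibp, hsub]
          simp only [sub_sub_cancel, hTIa, hTIb]
          ring
  have H1 : HasDerivAt (fun t => K (t - b)) (G (θ - b)) θ := by
    have h := (hK (θ - b)).comp θ ((hasDerivAt_id θ).sub_const b)
    simpa [Function.comp_def] using h
  have H2 : HasDerivAt (fun t => CI * K (t - a)) (CI * G (θ - a)) θ := by
    have h := ((hK (θ - a)).comp θ ((hasDerivAt_id θ).sub_const a)).const_mul CI
    simpa using h
  obtain ⟨C, hC⟩ := (isCompact_Icc (a := θ - 1 - max b a)
    (b := θ + 1 - min b a)).exists_bound_of_continuousOn hG.continuousOn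
  have H3 : HasDerivAt (fun t => ∫ u in b..a, τI u * K (t - u))
      (∫ u in b..a, τI u * G (θ - u)) θ := by
    have h := intervalIntegral.hasDerivAt_integral_of_dominated_loc_of_deriv_le
      (F := fun x t => τI t * K (x - t)) (F' := fun x t => τI t * G (x - t)) (x₀ := θ)
      (a := b) (b := a) (μ := volume) (bound := fun t => ‖τI t‖ * C)
      (Metric.ball_mem_nhds θ zero_lt_one)
      (Filter.Eventually.of_forall fun x =>
        (hτI.mul (hKcont.comp (continuous_const.sub continuous_id))).aestronglyMeasurable)
      ((hτI.mul (hKcont.comp (continuous_const.sub continuous_id))).intervalIntegrable _ _)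
      ((hτI.mul (hG.comp (continuous_const.sub continuous_id))).aestronglyMeasurable)
      ?_ ((hτI.norm.mul continuous_const).intervalIntegrable _ _) ?_
    · exact h.2
    · refine Filter.Eventually.of_forall fun t ht x hx => ?_
      have ht1 : min b a < t := ht.1
      have ht2 : t ≤ max b a := ht.2
      have hx' : |x - θ| < 1 := by
        simpa [Real.dist_eq] using hx
      rw [abs_lt] at hx'
      have hmem : x - t ∈ Icc (θ - 1 - max b a) (θ + 1 - min b a) := by
        constructor <;> [linarith; linarith]
      calc ‖τI t * G (x - t)‖ = ‖τI t‖ * ‖G (x - t)‖ := norm_mul _ _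
        _ ≤ ‖τI t‖ * C := mul_le_mul_of_nonneg_left (hC _ hmem) (norm_nonneg _)
    · refine Filter.Eventually.of_forall fun t ht x hx => ?_
      have h := ((hK (x - t)).comp x ((hasDerivAt_id x).sub_const t)).const_mul (τI t)
      simpa using h
  have Hsum : HasDerivAt
      (fun t => K (t - b) - CI * K (t - a) - ∫ u in b..a, τI u * K (t - u))
      (G (θ - b) - CI * G (θ - a) - ∫ u in b..a, τI u * G (θ - u)) θ := (H1.sub H2).sub H3
  have hfin : (∫ u in b..a, τI u * G (θ - u)) = ∫ z in (θ - a)..(θ - b), G z * τI (θ - z) := by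
    have h := intervalIntegral.integral_comp_sub_left (a := θ - a) (b := θ - b)
      (fun y => τI y * G (θ - y)) θ
    simp only [sub_sub_cancel] at h
    rw [← h]
    exact intervalIntegral.integral_congr fun z _ => mul_comm _ _
  rw [hfin] at Hsum
  exact Hsum.congr_of_eventuallyEq (Filter.Eventually.of_forall fun t => key t)
end
end

section
/- Consider two groups s ∈ {a, b} with population shares n_s > 0, qualification rates α_s ∈ (0,1), continuous feature densities G_s⁰, G_s¹ on [0,∞), and total utility U(θ_a, θ_b) = Σ_{s∈{a,b}} n_s [u₊ α_s ∫_{θ_s}^∞ G_s¹(x) dx − u₋ (1−α_s) ∫_{θ_s}^∞ G_s⁰(x) dx]. Let C_a, C_b : ℝ → ℝ be continuously differentiable constraint functions with C_s'(θ) ≠ 0 for all relevant θ. If (θ_a*, θ_b*) is an interior local maximizer of U subject to the fairness constraint C_a(θ_a) = C_b(θ_b), then Σ_{s∈{a,b}} n_s · [u₊ α_s G_s¹(θ_s*) − u₋ (1−α_s) G_s⁰(θ_s*)] / C_s'(θ_s*) = 0. -/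
noncomputable section

open Set MeasureTheory Filter Topology

/-- FTC for the tail integral: if `g` is continuous and integrable, then
`θ ↦ ∫ x in Ioi θ, g x` has derivative `-g t` at `t`. -/
lemma hasDerivAt_integral_Ioi {g : ℝ → ℝ} (hgc : Continuous g) (hgi : Integrable g) (t : ℝ) :
    HasDerivAt (fun θ => ∫ x in Ioi θ, g x) (-g t) t := by
  have heq : (fun θ => ∫ x in Ioi θ, g x)
      = fun θ => ((∫ x, g x) - (∫ x in Iic t, g x)) - ∫ x in t..θ, g x := by
    funext θ
    have h1 : (∫ x in Iic θ, g x) + ∫ x in Ioi θ, g x = ∫ x, g x :=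
      intervalIntegral.integral_Iic_add_Ioi hgi.integrableOn hgi.integrableOn
    have h2 : (∫ x in Iic θ, g x) - ∫ x in Iic t, g x = ∫ x in t..θ, g x :=
      intervalIntegral.integral_Iic_sub_Iic hgi.integrableOn hgi.integrableOn
    linarith
  have hd : HasDerivAt (fun θ => ∫ x in t..θ, g x) (g t) t :=
    (hgc.integral_hasStrictDerivAt t t).hasDerivAt
  rw [heq]
  simpa [Pi.sub_def] using (hasDerivAt_const t ((∫ x, g x) - (∫ x in Iic t, g x))).sub hd

/-- First-order condition for the fair non-strategic firm (Lemma 4): at an interior local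
maximizer of the two-group utility subject to the fairness constraint
`C_a(θ_a) = C_b(θ_b)`,
`Σ_s n_s [u₊ α_s G_s¹(θ_s) - u₋ (1-α_s) G_s⁰(θ_s)] / C_s'(θ_s) = 0`. -/
theorem fair_nonstrategic_foc
    (up um na nb αa αb : ℝ)
    (G0a G1a G0b G1b Ca Cb Ca' Cb' : ℝ → ℝ)
    (hup : 0 < up) (hum : 0 < um) (hna : 0 < na) (hnb : 0 < nb)
    (hαa : αa ∈ Ioo (0 : ℝ) 1) (hαb : αb ∈ Ioo (0 : ℝ) 1)
    (hG0ann : ∀ x, 0 ≤ G0a x) (hG1ann : ∀ x, 0 ≤ G1a x)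
    (hG0bnn : ∀ x, 0 ≤ G0b x) (hG1bnn : ∀ x, 0 ≤ G1b x)
    (hG0ac : Continuous G0a) (hG1ac : Continuous G1a)
    (hG0bc : Continuous G0b) (hG1bc : Continuous G1b)
    (hG0ai : Integrable G0a) (hG1ai : Integrable G1a)
    (hG0bi : Integrable G0b) (hG1bi : Integrable G1b)
    (hCa : ∀ θ, HasDerivAt Ca (Ca' θ) θ) (hCa'c : Continuous Ca')
    (hCa'0 : ∀ θ, Ca' θ ≠ 0)
    (hCb : ∀ θ, HasDerivAt Cb (Cb' θ) θ) (hCb'c : Continuous Cb')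
    (hCb'0 : ∀ θ, Cb' θ ≠ 0)
    (θa θb : ℝ)
    (hfeas : Ca θa = Cb θb)
    (hmax : IsLocalMaxOn
      (fun p : ℝ × ℝ =>
        na * (up * αa * (∫ x in Ioi p.1, G1a x)
              - um * (1 - αa) * ∫ x in Ioi p.1, G0a x)
        + nb * (up * αb * (∫ x in Ioi p.2, G1b x)
              - um * (1 - αb) * ∫ x in Ioi p.2, G0b x))
      {p : ℝ × ℝ | Ca p.1 = Cb p.2} (θa, θb)) :
    na * (up * αa * G1a θa - um * (1 - αa) * G0a θa) / Ca' θa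
      + nb * (up * αb * G1b θb - um * (1 - αb) * G0b θb) / Cb' θb = 0 := by
  -- `Ca` is strictly differentiable at `θa` with nonzero derivative
  have hSa : HasStrictDerivAt Ca (Ca' θa) θa :=
    hasStrictDerivAt_of_hasDerivAt_of_continuousAt
      (Eventually.of_forall hCa) (hCa'c.continuousAt)
  have hne : Ca' θa ≠ 0 := hCa'0 θa
  set e := hSa.hasStrictFDerivAt_equiv hne with he
  set inv : ℝ → ℝ := e.localInverse Ca _ θa with hinv
  -- the local parametrization of the constraint set
  set φ : ℝ → ℝ := fun t => inv (Cb t) with hφ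
  have hφθb : φ θb = θa := by
    simp only [hφ, ← hfeas, hinv]
    exact e.localInverse_apply_image
  -- derivative of φ at θb
  have hinvd : HasDerivAt inv (Ca' θa)⁻¹ (Cb θb) := by
    rw [← hfeas]
    exact (hSa.to_localInverse hne).hasDerivAt
  have hφd : HasDerivAt φ ((Ca' θa)⁻¹ * Cb' θb) θb :=
    HasDerivAt.comp θb hinvd (hCb θb)
  -- eventually, φ satisfies the constraint
  have hright : ∀ᶠ t in 𝓝 θb, Ca (φ t) = Cb t := by
    have h1 : Tendsto Cb (𝓝 θb) (𝓝 (Ca θa)) := by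
      rw [hfeas]; exact (hCb θb).continuousAt
    exact h1.eventually e.eventually_right_inverse
  -- the curve t ↦ (φ t, t) tends to (θa, θb) within the constraint set
  set f : ℝ × ℝ → ℝ := fun p =>
    na * (up * αa * (∫ x in Ioi p.1, G1a x)
          - um * (1 - αa) * ∫ x in Ioi p.1, G0a x)
    + nb * (up * αb * (∫ x in Ioi p.2, G1b x)
          - um * (1 - αb) * ∫ x in Ioi p.2, G0b x) with hf
  set g : ℝ → ℝ := fun t => f (φ t, t) with hg
  have hcurve : Tendsto (fun t => (φ t, t)) (𝓝 θb)
      (𝓝[{p : ℝ × ℝ | Ca p.1 = Cb p.2}] (θa, θb)) := by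
    rw [tendsto_nhdsWithin_iff]
    constructor
    · have : Tendsto φ (𝓝 θb) (𝓝 θa) := by
        have := hφd.continuousAt.tendsto
        rwa [hφθb] at this
      exact this.prodMk_nhds tendsto_id
    · filter_upwards [hright] with t ht
      exact ht
  -- g has a local max at θb
  have hgmax : IsLocalMax g θb := by
    have h1 : ∀ᶠ t in 𝓝 θb, f (φ t, t) ≤ f (θa, θb) := hcurve.eventually hmax
    have h2 : g θb = f (θa, θb) := by simp [hg, hφθb]
    rw [IsLocalMax, IsMaxFilter, h2]
    exact h1
  -- derivative of g at θb
  have hF1a : HasDerivAt (fun t => ∫ x in Ioi (φ t), G1a x)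
      (-G1a θa * ((Ca' θa)⁻¹ * Cb' θb)) θb := by
    have h := hasDerivAt_integral_Ioi hG1ac hG1ai (φ θb)
    have h2 := HasDerivAt.comp θb h hφd
    rw [hφθb] at h2
    simpa [Function.comp_def] using h2
  have hF0a : HasDerivAt (fun t => ∫ x in Ioi (φ t), G0a x)
      (-G0a θa * ((Ca' θa)⁻¹ * Cb' θb)) θb := by
    have h := hasDerivAt_integral_Ioi hG0ac hG0ai (φ θb)
    have h2 := HasDerivAt.comp θb h hφd
    rw [hφθb] at h2
    simpa [Function.comp_def] using h2
  have hF1b : HasDerivAt (fun t => ∫ x in Ioi t, G1b x) (-G1b θb) θb :=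
    hasDerivAt_integral_Ioi hG1bc hG1bi θb
  have hF0b : HasDerivAt (fun t => ∫ x in Ioi t, G0b x) (-G0b θb) θb :=
    hasDerivAt_integral_Ioi hG0bc hG0bi θb
  have hgd : HasDerivAt g
      (na * (up * αa * (-G1a θa * ((Ca' θa)⁻¹ * Cb' θb))
             - um * (1 - αa) * (-G0a θa * ((Ca' θa)⁻¹ * Cb' θb)))
       + nb * (up * αb * (-G1b θb) - um * (1 - αb) * (-G0b θb))) θb := by
    exact (((hF1a.const_mul (up * αa)).sub (hF0a.const_mul (um * (1 - αa)))).const_mul na).add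
      (((hF1b.const_mul (up * αb)).sub (hF0b.const_mul (um * (1 - αb)))).const_mul nb)
  have hD0 : na * (up * αa * (-G1a θa * ((Ca' θa)⁻¹ * Cb' θb))
             - um * (1 - αa) * (-G0a θa * ((Ca' θa)⁻¹ * Cb' θb)))
       + nb * (up * αb * (-G1b θb) - um * (1 - αb) * (-G0b θb)) = 0 := by
    have := hgmax.deriv_eq_zero
    rwa [hgd.deriv] at this
  have hnb' : Cb' θb ≠ 0 := hCb'0 θb
  have hkey : (na * (up * αa * G1a θa - um * (1 - αa) * G0a θa)) * ((Ca' θa)⁻¹ * Cb' θb)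
      + nb * (up * αb * G1b θb - um * (1 - αb) * G0b θb) = 0 := by
    linear_combination (-1 : ℝ) * hD0
  have h2 : (na * (up * αa * G1a θa - um * (1 - αa) * G0a θa)) * Cb' θb
      + nb * (up * αb * G1b θb - um * (1 - αb) * G0b θb) * Ca' θa = 0 := by
    have h4 : Ca' θa * ((Ca' θa)⁻¹ * Cb' θb) = Cb' θb := by
      field_simp
    linear_combination Ca' θa * hkey
      - (na * (up * αa * G1a θa - um * (1 - αa) * G0a θa)) * h4
  rw [div_add_div _ _ hne hnb', div_eq_zero_iff]
  left
  linear_combination h2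
end
end

section
/- Suppose agents exhibit Type 3 (manipulation-only) best responses: the manipulation impact is Ψ^y(θ) = ∫_{o_M(θ)}^{θ} G^y(z) (1 − T_M(θ − z)) dz with o_M(θ) = θ − T_M⁻¹(1 − C_M) > 0, where T_M is continuously differentiable with density τ_M, T_M(0) = 0, and T_M(T_M⁻¹(1 − C_M)) = 1 − C_M. Define the strategic utility Û(θ) = U(θ) + u₊ α Ψ¹(θ) − u₋ (1−α) Ψ⁰(θ). If θ̂ > T_M⁻¹(1 − C_M) is an interior local maximizer of Û, with G⁰, G¹ continuous and C_M G⁰(o_M(θ̂)) + ∫_{o_M(θ̂)}^{θ̂} G⁰(z) τ_M(θ̂ − z) dz > 0, then [C_M G¹(o_M(θ̂)) + ∫_{o_M(θ̂)}^{θ̂} G¹(z) τ_M(θ̂ − z) dz] / [C_M G⁰(o_M(θ̂)) + ∫_{o_M(θ̂)}^{θ̂} G⁰(z) τ_M(θ̂ − z) dz] = u₋(1−α)/(u₊ α). -/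
noncomputable section

open Set MeasureTheory intervalIntegral

/-- The firm's non-strategic expected utility under threshold `θ`. -/
def firmU (up um α : ℝ) (G0 G1 : ℝ → ℝ) (θ : ℝ) : ℝ :=
  up * α * (∫ x in Ioi θ, G1 x) - um * (1 - α) * ∫ x in Ioi θ, G0 x

/-- Type 3 manipulation impact of label-`y` agents with density `G`:
`Ψ(θ) = ∫_{o_M(θ)}^{θ} G(z)(1 - T_M(θ - z)) dz`, where `o_M(θ) = θ - T_M⁻¹(1 - C_M)`. -/
def PsiT3 (G TM : ℝ → ℝ) (CM θ : ℝ) : ℝ :=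
  ∫ z in (θ - ginv TM (1 - CM))..θ, G z * (1 - TM (θ - z))


lemma psiRewrite (G TM τM : ℝ → ℝ) (CM b : ℝ) (hGc : Continuous G)
    (hτMc : Continuous τM) (hTM' : ∀ x, HasDerivAt TM (τM x) x)
    (hTM0 : TM 0 = 0) (hTMb : TM b = 1 - CM) (θ : ℝ) :
    (∫ z in (θ - b)..θ, G z * (1 - TM (θ - z)))
      = (∫ x in (0:ℝ)..θ, G x) - CM * (∫ x in (0:ℝ)..(θ - b), G x)
        - ∫ u in (0:ℝ)..b, (∫ x in (0:ℝ)..(θ - u), G x) * τM u := by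
  set Φ : ℝ → ℝ := fun y => ∫ x in (0:ℝ)..y, G x with hΦ
  have hGθ : Continuous fun u => G (θ - u) := by fun_prop
  have h1 : (∫ z in (θ - b)..θ, G z * (1 - TM (θ - z)))
      = ∫ u in (0:ℝ)..b, G (θ - u) * (1 - TM u) := by
    have := intervalIntegral.integral_comp_sub_left (a := θ - b) (b := θ)
      (fun u => G (θ - u) * (1 - TM u)) θ
    simp only [sub_sub_cancel, sub_self] at this
    exact this
  have h2 : (∫ u in (0:ℝ)..b, G (θ - u))
      = Φ θ - Φ (θ - b) := by
    have := intervalIntegral.integral_comp_sub_left (a := (0:ℝ)) (b := b) G θ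
    rw [this, sub_zero]
    have := intervalIntegral.integral_add_adjacent_intervals (μ := volume)
      (a := (0:ℝ)) (b := θ - b) (c := θ)
      (hGc.intervalIntegrable _ _) (hGc.intervalIntegrable _ _)
    simp only [hΦ]
    linarith
  have hΦd : ∀ y, HasDerivAt Φ (G y) y := fun y =>
    (hGc.integral_hasStrictDerivAt 0 y).hasDerivAt
  have hΦc : Continuous Φ := by
    rw [continuous_iff_continuousAt]; exact fun y => (hΦd y).continuousAt
  have hTMc : Continuous TM := by
    rw [continuous_iff_continuousAt]; exact fun y => (hTM' y).continuousAt
  have hparts : (∫ u in (0:ℝ)..b, TM u * G (θ - u))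
      = TM b * (-(Φ (θ - b))) - TM 0 * (-(Φ θ))
        - ∫ u in (0:ℝ)..b, τM u * (-(Φ (θ - u))) := by
    have key := intervalIntegral.integral_mul_deriv_eq_deriv_mul (a := (0:ℝ)) (b := b)
      (u := TM) (u' := τM) (v := fun t => -(Φ (θ - t))) (v' := fun t => G (θ - t))
      (fun x _ => hTM' x) (fun x _ => by
        have : HasDerivAt (fun t => Φ (θ - t)) (G (θ - x) * (-1)) x :=
          (hΦd (θ - x)).comp x ((hasDerivAt_id x).const_sub θ)
        simpa using this.fun_neg)
      (hτMc.intervalIntegrable _ _) (hGθ.intervalIntegrable _ _)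
    simpa using key
  have hsplit : (∫ u in (0:ℝ)..b, G (θ - u) * (1 - TM u))
      = (∫ u in (0:ℝ)..b, G (θ - u)) - ∫ u in (0:ℝ)..b, TM u * G (θ - u) := by
    rw [← intervalIntegral.integral_sub (hGθ.intervalIntegrable _ _)
      ((hTMc.fun_mul hGθ).intervalIntegrable _ _)]
    congr 1; ext u; ring
  have hK : (∫ u in (0:ℝ)..b, τM u * (-(Φ (θ - u))))
      = -∫ u in (0:ℝ)..b, Φ (θ - u) * τM u := by
    rw [← intervalIntegral.integral_neg]; congr 1; ext u; ring
  rw [h1, hsplit, h2, hparts, hK, hTM0, hTMb]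
  simp only [hΦ]
  ring

lemma hasDerivAt_Kint (G τM : ℝ → ℝ) (hGc : Continuous G) (hτMc : Continuous τM)
    (b x0 : ℝ) :
    HasDerivAt (fun θ => ∫ u in (0:ℝ)..b, (∫ x in (0:ℝ)..(θ - u), G x) * τM u)
      (∫ u in (0:ℝ)..b, G (x0 - u) * τM u) x0 := by
  set Φ : ℝ → ℝ := fun y => ∫ x in (0:ℝ)..y, G x with hΦ
  have hΦd : ∀ y, HasDerivAt Φ (G y) y := fun y =>
    (hGc.integral_hasStrictDerivAt 0 y).hasDerivAt
  have hΦc : Continuous Φ := by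
    rw [continuous_iff_continuousAt]; exact fun y => (hΦd y).continuousAt
  obtain ⟨M, hM⟩ := (isCompact_Icc (a := x0 - 1 - |b|) (b := x0 + 1 + |b|)).exists_bound_of_continuousOn
    hGc.continuousOn
  have key := intervalIntegral.hasDerivAt_integral_of_dominated_loc_of_deriv_le
    (μ := volume) (a := (0:ℝ)) (b := b) (x₀ := x0)
    (F := fun θ u => Φ (θ - u) * τM u) (F' := fun θ u => G (θ - u) * τM u)
    (bound := fun u => M * |τM u|) (s := Metric.ball x0 1) (Metric.ball_mem_nhds x0 one_pos)
    (Filter.Eventually.of_forall fun x =>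
      ((hΦc.comp (continuous_const.sub continuous_id)).mul hτMc).aestronglyMeasurable)
    (((hΦc.comp (continuous_const.sub continuous_id)).mul hτMc).intervalIntegrable _ _)
    (((hGc.comp (continuous_const.sub continuous_id)).mul hτMc).aestronglyMeasurable)
    (Filter.Eventually.of_forall fun u hu x hx => by
      have hub : |u| ≤ |b| := by
        rcases hu with ⟨h1, h2⟩
        have hb1 : -|b| ≤ min 0 b := le_min (neg_nonpos.mpr (abs_nonneg b)) (neg_abs_le b)
        have hb2 : max 0 b ≤ |b| := max_le (abs_nonneg b) (le_abs_self b)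
        rw [abs_le]; constructor <;> [linarith [h1.le]; linarith]
      have hxd : |x - x0| < 1 := by
        simpa [Real.dist_eq] using Metric.mem_ball.mp hx
      have habs := abs_le.mp hub
      have hxd' := abs_lt.mp hxd
      have hmem : x - u ∈ Icc (x0 - 1 - |b|) (x0 + 1 + |b|) := by
        constructor <;> simp <;> linarith
      have := hM (x - u) hmem
      calc ‖G (x - u) * τM u‖ = ‖G (x - u)‖ * |τM u| := by
            rw [norm_mul]; rfl
        _ ≤ M * |τM u| := by
            apply mul_le_mul_of_nonneg_right this (abs_nonneg _))
    ((continuous_const.mul hτMc.abs).intervalIntegrable _ _)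
    (Filter.Eventually.of_forall fun u hu x hx => by
      have : HasDerivAt (fun θ => Φ (θ - u)) (G (x - u) * 1) x :=
        by have := (hΦd (x - u)).comp x ((hasDerivAt_id' x).sub_const u); exact this
      simpa using this.mul_const (τM u))
  exact key.2


/-- First-order condition for the unfair strategic firm under Type 3 (manipulation-only)
best responses (Lemma 3, Type 3 column of Table 2). -/
theorem strategic_unfair_foc_type3
    (up um α CM : ℝ) (G0 G1 TM τM : ℝ → ℝ)
    (hup : 0 < up) (hum : 0 < um) (hα : α ∈ Ioo (0 : ℝ) 1)
    (hCM0 : 0 ≤ CM) (hCM1 : CM < 1)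
    (hG0c : Continuous G0) (hG1c : Continuous G1)
    (hG0nn : ∀ x, 0 ≤ G0 x) (hG1nn : ∀ x, 0 ≤ G1 x)
    (hG0int : Integrable G0) (hG1int : Integrable G1)
    (hτMc : Continuous τM)
    (hTM' : ∀ b, HasDerivAt TM (τM b) b)
    (hTM0 : TM 0 = 0)
    (hTMinv : TM (ginv TM (1 - CM)) = 1 - CM)
    (θh : ℝ) (hθh : ginv TM (1 - CM) < θh)
    (hmax : IsLocalMax
      (fun t => firmU up um α G0 G1 t
        + up * α * PsiT3 G1 TM CM t - um * (1 - α) * PsiT3 G0 TM CM t) θh)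
    (hden : 0 < CM * G0 (θh - ginv TM (1 - CM))
        + ∫ z in (θh - ginv TM (1 - CM))..θh, G0 z * τM (θh - z)) :
    (CM * G1 (θh - ginv TM (1 - CM))
        + ∫ z in (θh - ginv TM (1 - CM))..θh, G1 z * τM (θh - z))
      / (CM * G0 (θh - ginv TM (1 - CM))
        + ∫ z in (θh - ginv TM (1 - CM))..θh, G0 z * τM (θh - z))
      = um * (1 - α) / (up * α) := by
  obtain ⟨hα0, hα1⟩ := hα
  set b : ℝ := ginv TM (1 - CM) with hb
  -- antiderivatives
  have hΦ1d : ∀ y, HasDerivAt (fun y => ∫ x in (0:ℝ)..y, G1 x) (G1 y) y := fun y =>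
    (hG1c.integral_hasStrictDerivAt 0 y).hasDerivAt
  have hΦ0d : ∀ y, HasDerivAt (fun y => ∫ x in (0:ℝ)..y, G0 x) (G0 y) y := fun y =>
    (hG0c.integral_hasStrictDerivAt 0 y).hasDerivAt
  -- rewrite Ioi integrals
  have hIoi : ∀ (G : ℝ → ℝ), Integrable G → ∀ θ : ℝ,
      (∫ x in Ioi θ, G x) = (∫ x, G x) - (∫ x in Iic (0:ℝ), G x) - ∫ x in (0:ℝ)..θ, G x := by
    intro G hGint θ
    have h1 := intervalIntegral.integral_Iic_add_Ioi (μ := volume) (b := θ)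
      hGint.integrableOn hGint.integrableOn
    have h2 := intervalIntegral.integral_Iic_sub_Iic (μ := volume) (a := (0:ℝ)) (b := θ)
      hGint.integrableOn hGint.integrableOn
    linarith
  -- rewrite the objective
  have hfun : (fun t => firmU up um α G0 G1 t
        + up * α * PsiT3 G1 TM CM t - um * (1 - α) * PsiT3 G0 TM CM t)
      = fun t => (up * α * ((∫ x, G1 x) - (∫ x in Iic (0:ℝ), G1 x) - ∫ x in (0:ℝ)..t, G1 x)
          - um * (1 - α) * ((∫ x, G0 x) - (∫ x in Iic (0:ℝ), G0 x) - ∫ x in (0:ℝ)..t, G0 x))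
        + up * α * ((∫ x in (0:ℝ)..t, G1 x) - CM * (∫ x in (0:ℝ)..(t - b), G1 x)
            - ∫ u in (0:ℝ)..b, (∫ x in (0:ℝ)..(t - u), G1 x) * τM u)
        - um * (1 - α) * ((∫ x in (0:ℝ)..t, G0 x) - CM * (∫ x in (0:ℝ)..(t - b), G0 x)
            - ∫ u in (0:ℝ)..b, (∫ x in (0:ℝ)..(t - u), G0 x) * τM u) := by
    funext t
    rw [firmU, PsiT3, PsiT3, hIoi G1 hG1int t, hIoi G0 hG0int t, ← hb,
      psiRewrite G1 TM τM CM b hG1c hτMc hTM' hTM0 hTMinv t,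
      psiRewrite G0 TM τM CM b hG0c hτMc hTM' hTM0 hTMinv t]
  rw [hfun] at hmax
  -- derivative of the objective at θh
  have d1b : HasDerivAt (fun t => ∫ x in (0:ℝ)..(t - b), G1 x) (G1 (θh - b) * 1) θh :=
    by have := (hΦ1d (θh - b)).comp θh ((hasDerivAt_id' θh).sub_const b); exact this
  have d0b : HasDerivAt (fun t => ∫ x in (0:ℝ)..(t - b), G0 x) (G0 (θh - b) * 1) θh :=
    by have := (hΦ0d (θh - b)).comp θh ((hasDerivAt_id' θh).sub_const b); exact this
  have dK1 := hasDerivAt_Kint G1 τM hG1c hτMc b θh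
  have dK0 := hasDerivAt_Kint G0 τM hG0c hτMc b θh
  have H1 : HasDerivAt
      (fun t => (∫ x, G1 x) - (∫ x in Iic (0:ℝ), G1 x) - ∫ x in (0:ℝ)..t, G1 x)
      (-(G1 θh)) θh := (hΦ1d θh).const_sub _
  have H0 : HasDerivAt
      (fun t => (∫ x, G0 x) - (∫ x in Iic (0:ℝ), G0 x) - ∫ x in (0:ℝ)..t, G0 x)
      (-(G0 θh)) θh := (hΦ0d θh).const_sub _
  have H1' : HasDerivAt
      (fun t => (∫ x in (0:ℝ)..t, G1 x) - CM * (∫ x in (0:ℝ)..(t - b), G1 x)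
        - ∫ u in (0:ℝ)..b, (∫ x in (0:ℝ)..(t - u), G1 x) * τM u)
      (G1 θh - CM * (G1 (θh - b) * 1) - ∫ u in (0:ℝ)..b, G1 (θh - u) * τM u) θh :=
    ((hΦ1d θh).sub (d1b.const_mul CM)).sub dK1
  have H0' : HasDerivAt
      (fun t => (∫ x in (0:ℝ)..t, G0 x) - CM * (∫ x in (0:ℝ)..(t - b), G0 x)
        - ∫ u in (0:ℝ)..b, (∫ x in (0:ℝ)..(t - u), G0 x) * τM u)
      (G0 θh - CM * (G0 (θh - b) * 1) - ∫ u in (0:ℝ)..b, G0 (θh - u) * τM u) θh :=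
    ((hΦ0d θh).sub (d0b.const_mul CM)).sub dK0
  have Hfull := (((H1.const_mul (up * α)).sub (H0.const_mul (um * (1 - α)))).add
      (H1'.const_mul (up * α))).sub (H0'.const_mul (um * (1 - α)))
  have hE := hmax.hasDerivAt_eq_zero Hfull
  -- convert the J-integrals back
  have hJ : ∀ (G : ℝ → ℝ),
      (∫ u in (0:ℝ)..b, G (θh - u) * τM u) = ∫ z in (θh - b)..θh, G z * τM (θh - z) := by
    intro G
    have := intervalIntegral.integral_comp_sub_left (a := θh - b) (b := θh)
      (fun u => G (θh - u) * τM u) θh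
    simp only [sub_sub_cancel, sub_self] at this
    exact this.symm
  rw [hJ G1, hJ G0, mul_one, mul_one] at hE
  rw [div_eq_div_iff hden.ne' (by positivity)]
  linear_combination -hE
end
end

section
/- Suppose agents exhibit Type 1 (affordable improvement) best responses: for label y ∈ {0,1}, the improvement impact is Φ^y(θ) = ∫_{o_I^y(θ)}^{r(θ)} G^y(z)(1 − T_I^y(θ − z)) dz and the manipulation impact is Ψ^y(θ) = ∫_{r(θ)}^{θ} G^y(z)(1 − T_M(θ − z)) dz, where o_I^y(θ) = θ − (T_I^y)⁻¹(1 − C_I) > 0 and r(θ) = θ − T_M⁻¹(C_I − C_M) > o_I^y(θ), T_M and T_I^y are continuously differentiable with densities τ_M, τ_I^y, T_M(0) = 0, T_M(T_M⁻¹(p)) = p and T_I^y((T_I^y)⁻¹(p)) = p at the relevant values, and T_M⁻¹(C_I − C_M) ≤ b̲_I^y (acceptance under improvement is certain at r). Define the strategic utility Û(θ) = U(θ) + u₊ α (Φ¹(θ) + Ψ¹(θ)) + u₊ (1−α) Φ⁰(θ) − u₋ (1−α) Ψ⁰(θ). If θ̂ is an interior local maximizer of Û with (1 − (C_I − C_M))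 G⁰(r(θ̂)) + ∫_{r(θ̂)}^{θ̂} G⁰(z) τ_M(θ̂ − z) dz > 0, then [C_I G¹(o_I¹(θ̂)) + ∫_{o_I¹(θ̂)}^{r(θ̂)} G¹(z) τ_I¹(θ̂ − z) dz + ∫_{r(θ̂)}^{θ̂} G¹(z) τ_M(θ̂ − z) dz − (C_I − C_M) G¹(r(θ̂)) + ((1−α)/α)(C_I G⁰(o_I⁰(θ̂)) + ∫_{o_I⁰(θ̂)}^{r(θ̂)} G⁰(z) τ_I⁰(θ̂ − z) dz − G⁰(r(θ̂)))] / [(1 − (C_I − C_M)) G⁰(r(θ̂)) + ∫_{r(θ̂)}^{θ̂} G⁰(z) τ_M(θ̂ − z) dz] = u₋(1−α)/(u₊ α). -/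
noncomputable section

open Set MeasureTheory intervalIntegral

namespace FocAux

variable {G T τ : ℝ → ℝ}

lemma primitive_hasDerivAt (hG : Continuous G) (x : ℝ) :
    HasDerivAt (fun t => ∫ u in (0:ℝ)..t, G u) (G x) x :=
  (hG.integral_hasStrictDerivAt 0 x).hasDerivAt

lemma primitive_cont (hG : Continuous G) :
    Continuous (fun t => ∫ u in (0:ℝ)..t, G u) :=
  continuous_iff_continuousAt.2 fun x =>
    (primitive_hasDerivAt hG x).differentiableAt.continuousAt

lemma hasDerivAt_sub_comp (hT : ∀ b, HasDerivAt T (τ b) b) (t x : ℝ) :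
    HasDerivAt (fun z => T (t - z)) (-τ (t - x)) x := by
  have hsub : HasDerivAt (fun z : ℝ => t - z) (-1) x := (hasDerivAt_id x).const_sub t
  exact ((hT (t - x)).comp x hsub).congr_deriv (by ring)

/-- Pointwise decomposition of the impact integral via integration by parts and
substitution. -/
lemma V_eq (hG : Continuous G) (hτ : Continuous τ)
    (hT : ∀ b, HasDerivAt T (τ b) b) (a b t : ℝ) :
    (∫ z in (t - a)..(t - b), G z * (1 - T (t - z)))
      = (∫ u in (0:ℝ)..(t - b), G u) * (1 - T b)
        - (∫ u in (0:ℝ)..(t - a), G u) * (1 - T a)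
        - ∫ u in b..a, (∫ w in (0:ℝ)..(t - u), G w) * τ u := by
  have hTc : Continuous T :=
    continuous_iff_continuousAt.2 fun x => (hT x).differentiableAt.continuousAt
  set F : ℝ → ℝ := fun x => ∫ u in (0:ℝ)..x, G u with hF
  set p := t - a
  set q := t - b
  have hTtc : Continuous fun z => T (t - z) := hTc.comp (continuous_const.sub continuous_id)
  have hτtc : Continuous fun z => τ (t - z) := hτ.comp (continuous_const.sub continuous_id)
  -- split off the constant 1
  have h1 : (∫ z in p..q, G z * (1 - T (t - z)))
      = (∫ z in p..q, G z) - ∫ z in p..q, G z * T (t - z) := by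
    simp only [mul_one_sub]
    exact integral_sub (hG.intervalIntegrable _ _)
      ((hG.mul hTtc).intervalIntegrable _ _)
  have h2 : (∫ z in p..q, G z) = F q - F p :=
    (integral_interval_sub_left (hG.intervalIntegrable 0 q)
      (hG.intervalIntegrable 0 p)).symm
  -- integration by parts
  have h3 : ∫ x in p..q, F x * (-τ (t - x))
      = F q * T (t - q) - F p * T (t - p) - ∫ x in p..q, G x * T (t - x) := by
    refine integral_mul_deriv_eq_deriv_mul
      (fun x _ => primitive_hasDerivAt hG x)
      (fun x _ => hasDerivAt_sub_comp hT t x)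
      (hG.intervalIntegrable _ _) (hτtc.neg.intervalIntegrable _ _)
  -- substitution in the remaining integral
  have h4 : (∫ x in b..a, F (t - x) * τ x) = ∫ x in p..q, F x * τ (t - x) := by
    have := integral_comp_sub_left (fun z => F z * τ (t - z)) t (a := b) (b := a)
    simpa [sub_sub_cancel] using this
  have h5 : (∫ x in p..q, F x * (-τ (t - x))) = -∫ x in p..q, F x * τ (t - x) := by
    simp [mul_neg, intervalIntegral.integral_neg]
  have hq : t - q = b := by simp [q]
  have hp : t - p = a := by simp [p]
  rw [hq, hp] at h3
  have h6 : (∫ u in b..a, F (t - u) * τ u) = ∫ x in p..q, F x * τ (t - x) := h4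
  rw [h1, h2]
  have : (∫ z in p..q, G z * T (t - z))
      = F q * T b - F p * T a + ∫ x in p..q, F x * τ (t - x) := by linarith [h3, h5]
  rw [this, h6]
  ring

end FocAux

namespace FocAux2
open FocAux

variable {G T τ : ℝ → ℝ}

lemma J_hasDerivAt (hG : Continuous G) (hτ : Continuous τ) (a b θ : ℝ) :
    HasDerivAt (fun t => ∫ u in b..a, (∫ w in (0:ℝ)..(t - u), G w) * τ u)
      (∫ u in b..a, G (θ - u) * τ u) θ := by
  set R := 1 + |a| + |b| with hR
  obtain ⟨C, hC⟩ := (isCompact_Icc (a := θ - R) (b := θ + R)).exists_bound_of_continuousOn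
    hG.continuousOn
  have hFc := primitive_cont hG
  have hcont : ∀ x : ℝ, Continuous fun u => (∫ w in (0:ℝ)..(x - u), G w) * τ u := fun x =>
    (hFc.comp (continuous_const.sub continuous_id)).mul hτ
  have hcont' : Continuous fun u => G (θ - u) * τ u :=
    (hG.comp (continuous_const.sub continuous_id)).mul hτ
  have hmem : ∀ u ∈ Set.uIoc b a, ∀ x ∈ Metric.ball θ 1, (x - u) ∈ Icc (θ - R) (θ + R) := by
    intro u hu x hx
    have h1 : u ≤ max b a := hu.2
    have h2 : min b a ≤ u := le_of_lt hu.1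
    have hb1 : b ≤ |b| := le_abs_self b
    have hb2 : -|b| ≤ b := neg_abs_le b
    have ha1 : a ≤ |a| := le_abs_self a
    have ha2 : -|a| ≤ a := neg_abs_le a
    have hxθ : |x - θ| < 1 := by simpa [Real.dist_eq] using hx
    have hxθ' := abs_lt.1 hxθ
    constructor
    · have : max b a ≤ |a| + |b| := max_le (by linarith) (by linarith)
      simp only [hR]; linarith
    · have : -(|a| + |b|) ≤ min b a := le_min (by linarith) (by linarith)
      simp only [hR]; linarith
  have main := (hasDerivAt_integral_of_dominated_loc_of_deriv_le
    (F := fun x u => (∫ w in (0:ℝ)..(x - u), G w) * τ u)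
    (F' := fun x u => G (x - u) * τ u)
    (bound := fun u => C * |τ u|) (μ := volume)
    (a := b) (b := a) (x₀ := θ) (s := Metric.ball θ 1) (Metric.ball_mem_nhds θ one_pos)
    (Filter.Eventually.of_forall fun x => (hcont x).aestronglyMeasurable)
    ((hcont θ).intervalIntegrable _ _)
    hcont'.aestronglyMeasurable
    (Filter.Eventually.of_forall ?_)
    ((continuous_const.mul hτ.abs).intervalIntegrable _ _)
    (Filter.Eventually.of_forall ?_)).2
  · exact main
  · intro u hu x hx
    have := hC _ (hmem u hu x hx)
    have h2 : ‖G (x - u) * τ u‖ = ‖G (x - u)‖ * |τ u| := by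
      simp [abs_mul, Real.norm_eq_abs]
    rw [h2]
    exact mul_le_mul_of_nonneg_right this (abs_nonneg _)
  · intro u _ x _
    have := ((primitive_hasDerivAt hG (x - u)).comp x
      ((hasDerivAt_id x).sub_const u)).mul_const (τ u)
    simpa using this

lemma key_hasDerivAt (hG : Continuous G) (hτ : Continuous τ)
    (hT : ∀ b, HasDerivAt T (τ b) b) (a b θ : ℝ) :
    HasDerivAt (fun t => ∫ z in (t - a)..(t - b), G z * (1 - T (t - z)))
      (G (θ - b) * (1 - T b) - G (θ - a) * (1 - T a)
        - ∫ z in (θ - a)..(θ - b), G z * τ (θ - z)) θ := by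
  have heq : (fun t => ∫ z in (t - a)..(t - b), G z * (1 - T (t - z)))
      = fun t => (∫ u in (0:ℝ)..(t - b), G u) * (1 - T b)
        - (∫ u in (0:ℝ)..(t - a), G u) * (1 - T a)
        - ∫ u in b..a, (∫ w in (0:ℝ)..(t - u), G w) * τ u :=
    funext fun t => V_eq hG hτ hT a b t
  rw [heq]
  have h1 : HasDerivAt (fun t => (∫ u in (0:ℝ)..(t - b), G u) * (1 - T b))
      (G (θ - b) * (1 - T b)) θ := by
    have := ((primitive_hasDerivAt hG (θ - b)).comp θ
      ((hasDerivAt_id θ).sub_const b)).mul_const (1 - T b)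
    simpa using this
  have h2 : HasDerivAt (fun t => (∫ u in (0:ℝ)..(t - a), G u) * (1 - T a))
      (G (θ - a) * (1 - T a)) θ := by
    have := ((primitive_hasDerivAt hG (θ - a)).comp θ
      ((hasDerivAt_id θ).sub_const a)).mul_const (1 - T a)
    simpa using this
  have h3 := J_hasDerivAt hG hτ a b θ
  have h4 : (∫ u in b..a, G (θ - u) * τ u)
      = ∫ z in (θ - a)..(θ - b), G z * τ (θ - z) := by
    have := integral_comp_sub_left (fun z => G z * τ (θ - z)) θ (a := b) (b := a)
    simpa [sub_sub_cancel] using this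
  rw [h4] at h3
  exact (h1.sub h2).sub h3

lemma hasDerivAt_integral_Ioi (hG : Continuous G) (hGi : Integrable G) (θ : ℝ) :
    HasDerivAt (fun t => ∫ x in Ioi t, G x) (-G θ) θ := by
  have heq : (fun t => ∫ x in Ioi t, G x)
      = fun t => ((∫ x, G x) - ∫ x in Iic (0:ℝ), G x) - ∫ u in (0:ℝ)..t, G u := by
    funext t
    have h1 : (∫ x in Iic t, G x) + ∫ x in Ioi t, G x = ∫ x, G x :=
      integral_Iic_add_Ioi hGi.integrableOn hGi.integrableOn
    have h2 : (∫ x in Iic t, G x) - ∫ x in Iic (0:ℝ), G x = ∫ u in (0:ℝ)..t, G u :=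
      integral_Iic_sub_Iic hGi.integrableOn hGi.integrableOn
    linarith
  rw [heq]
  simpa using (primitive_hasDerivAt hG θ).const_sub ((∫ x, G x) - ∫ x in Iic (0:ℝ), G x)

end FocAux2


/-- Improvement opt-in feature `o_I(θ) = θ - T_I⁻¹(1 - C_I)`. -/
def oI (TI : ℝ → ℝ) (CI θ : ℝ) : ℝ := θ - ginv TI (1 - CI)

/-- Risk-taker feature `r(θ) = θ - T_M⁻¹(C_I - C_M)`. -/
def rT (TM : ℝ → ℝ) (CM CI θ : ℝ) : ℝ := θ - ginv TM (CI - CM)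

/-- Type 1 improvement impact `Φ(θ) = ∫_{o_I(θ)}^{r(θ)} G(z)(1 - T_I(θ - z)) dz`. -/
def PhiT1 (G TI TM : ℝ → ℝ) (CM CI θ : ℝ) : ℝ :=
  ∫ z in (oI TI CI θ)..(rT TM CM CI θ), G z * (1 - TI (θ - z))

/-- Type 1 manipulation impact `Ψ(θ) = ∫_{r(θ)}^{θ} G(z)(1 - T_M(θ - z)) dz`. -/
def PsiT1 (G TM : ℝ → ℝ) (CM CI θ : ℝ) : ℝ :=
  ∫ z in (rT TM CM CI θ)..θ, G z * (1 - TM (θ - z))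

/-- First-order condition for the unfair strategic firm under Type 1 (affordable
improvement) best responses (Lemma 3, Type 1 column of Table 2). -/
theorem strategic_unfair_foc_type1
    (up um α CM CI : ℝ) (G0 G1 TM τM TI0 τI0 TI1 τI1 : ℝ → ℝ)
    (bI0lo bI1lo : ℝ)
    (hup : 0 < up) (hum : 0 < um) (hα : α ∈ Ioo (0 : ℝ) 1)
    (hCM0 : 0 ≤ CM) (hCMI : CM < CI) (hCI : CI < 1)
    (hG0c : Continuous G0) (hG1c : Continuous G1)
    (hG0nn : ∀ x, 0 ≤ G0 x) (hG1nn : ∀ x, 0 ≤ G1 x)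
    (hG0int : Integrable G0) (hG1int : Integrable G1)
    (hτMc : Continuous τM) (hTM' : ∀ b, HasDerivAt TM (τM b) b)
    (hτI0c : Continuous τI0) (hTI0' : ∀ b, HasDerivAt TI0 (τI0 b) b)
    (hτI1c : Continuous τI1) (hTI1' : ∀ b, HasDerivAt TI1 (τI1 b) b)
    (hTM0 : TM 0 = 0)
    (hTMinv : TM (ginv TM (CI - CM)) = CI - CM)
    (hTI0inv : TI0 (ginv TI0 (1 - CI)) = 1 - CI)
    (hTI1inv : TI1 (ginv TI1 (1 - CI)) = 1 - CI)
    (hTI0zero : ∀ b ≤ bI0lo, TI0 b = 0)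
    (hTI1zero : ∀ b ≤ bI1lo, TI1 b = 0)
    (hcert0 : ginv TM (CI - CM) ≤ bI0lo)
    (hcert1 : ginv TM (CI - CM) ≤ bI1lo)
    (θh : ℝ)
    (hoI0 : 0 < oI TI0 CI θh) (hoI1 : 0 < oI TI1 CI θh)
    (hr0 : oI TI0 CI θh < rT TM CM CI θh) (hr1 : oI TI1 CI θh < rT TM CM CI θh)
    (hmax : IsLocalMax
      (fun t => firmU up um α G0 G1 t
        + up * α * (PhiT1 G1 TI1 TM CM CI t + PsiT1 G1 TM CM CI t)
        + up * (1 - α) * PhiT1 G0 TI0 TM CM CI t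
        - um * (1 - α) * PsiT1 G0 TM CM CI t) θh)
    (hden : 0 < (1 - (CI - CM)) * G0 (rT TM CM CI θh)
        + ∫ z in (rT TM CM CI θh)..θh, G0 z * τM (θh - z)) :
    (CI * G1 (oI TI1 CI θh)
        + (∫ z in (oI TI1 CI θh)..(rT TM CM CI θh), G1 z * τI1 (θh - z))
        + (∫ z in (rT TM CM CI θh)..θh, G1 z * τM (θh - z))
        - (CI - CM) * G1 (rT TM CM CI θh)
        + ((1 - α) / α) * (CI * G0 (oI TI0 CI θh)
            + (∫ z in (oI TI0 CI θh)..(rT TM CM CI θh), G0 z * τI0 (θh - z))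
            - G0 (rT TM CM CI θh)))
      / ((1 - (CI - CM)) * G0 (rT TM CM CI θh)
        + ∫ z in (rT TM CM CI θh)..θh, G0 z * τM (θh - z))
      = um * (1 - α) / (up * α) := by
  obtain ⟨hα0, hα1⟩ := hα
  -- unfold the threshold abbreviations
  simp only [oI, rT] at hr0 hr1 hoI0 hoI1 hden ⊢
  set cM := ginv TM (CI - CM) with hcM
  set c1 := ginv TI1 (1 - CI) with hc1
  set c0 := ginv TI0 (1 - CI) with hc0
  -- derivative of the non-strategic utility
  have hU : HasDerivAt (fun t => firmU up um α G0 G1 t)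
      (up * α * (-G1 θh) - um * (1 - α) * (-G0 θh)) θh := by
    unfold firmU
    exact ((FocAux2.hasDerivAt_integral_Ioi hG1c hG1int θh).const_mul (up * α)).sub
      ((FocAux2.hasDerivAt_integral_Ioi hG0c hG0int θh).const_mul (um * (1 - α)))
  -- derivatives of the impact terms
  have hP1 : HasDerivAt (fun t => PhiT1 G1 TI1 TM CM CI t)
      (G1 (θh - cM) * (1 - TI1 cM) - G1 (θh - c1) * (1 - TI1 c1)
        - ∫ z in (θh - c1)..(θh - cM), G1 z * τI1 (θh - z)) θh :=
    FocAux2.key_hasDerivAt hG1c hτI1c hTI1' c1 cM θh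
  have hP0 : HasDerivAt (fun t => PhiT1 G0 TI0 TM CM CI t)
      (G0 (θh - cM) * (1 - TI0 cM) - G0 (θh - c0) * (1 - TI0 c0)
        - ∫ z in (θh - c0)..(θh - cM), G0 z * τI0 (θh - z)) θh :=
    FocAux2.key_hasDerivAt hG0c hτI0c hTI0' c0 cM θh
  have hS1 : HasDerivAt (fun t => PsiT1 G1 TM CM CI t)
      (G1 θh * (1 - TM 0) - G1 (θh - cM) * (1 - TM cM)
        - ∫ z in (θh - cM)..θh, G1 z * τM (θh - z)) θh := by
    have := FocAux2.key_hasDerivAt hG1c hτMc hTM' cM 0 θh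
    simp only [sub_zero] at this; exact this
  have hS0 : HasDerivAt (fun t => PsiT1 G0 TM CM CI t)
      (G0 θh * (1 - TM 0) - G0 (θh - cM) * (1 - TM cM)
        - ∫ z in (θh - cM)..θh, G0 z * τM (θh - z)) θh := by
    have := FocAux2.key_hasDerivAt hG0c hτMc hTM' cM 0 θh
    simp only [sub_zero] at this; exact this
  -- derivative of the full strategic utility
  have hD := ((hU.add ((hP1.add hS1).const_mul (up * α))).add
      (hP0.const_mul (up * (1 - α)))).sub (hS0.const_mul (um * (1 - α)))
  have h0 := hmax.hasDerivAt_eq_zero hD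
  -- substitute the boundary values
  rw [hTM0, hTMinv, hTI1inv, hTI0inv, hTI1zero cM hcert1, hTI0zero cM hcert0] at h0
  -- abbreviations for the atoms
  set g1r := G1 (θh - cM)
  set g0r := G0 (θh - cM)
  set g1o := G1 (θh - c1)
  set g0o := G0 (θh - c0)
  set II1 := ∫ z in (θh - c1)..(θh - cM), G1 z * τI1 (θh - z)
  set II0 := ∫ z in (θh - c0)..(θh - cM), G0 z * τI0 (θh - z)
  set IM1 := ∫ z in (θh - cM)..θh, G1 z * τM (θh - z)
  set IM0 := ∫ z in (θh - cM)..θh, G0 z * τM (θh - z)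
  have hkey : up * α * (CI * g1o + II1 + IM1 - (CI - CM) * g1r)
      + up * (1 - α) * (CI * g0o + II0 - g0r)
      = um * (1 - α) * ((1 - (CI - CM)) * g0r + IM0) := by
    linear_combination -h0
  rw [div_eq_div_iff hden.ne' (mul_pos hup hα0).ne']
  field_simp
  linear_combination hkey
end
end

section
/- Consider two groups s ∈ {a, b} with shares n_s > 0, qualification rates α_s ∈ (0,1), continuous feature densities G_s⁰, G_s¹, Type 3 (manipulation-only) best responses with label-independent manipulation boost CDF T_{M,s} (continuously differentiable with density τ_{M,s}, T_{M,s}(0) = 0, T_{M,s}(T_{M,s}⁻¹(1 − C_{M,s})) = 1 − C_{M,s}) and cost C_{M,s} ∈ [0,1), manipulation impacts Ψ_s^y(θ) = ∫_{o_{M,s}(θ)}^{θ} G_s^y(z)(1 − T_{M,s}(θ − z)) dz with o_{M,s}(θ) = θ − T_{M,s}⁻¹(1 − C_{M,s}) > 0, strategic utility Û(θ_a, θ_b) = Σ_s n_s [u₊ α_s ∫_{θ_s}^∞ G_s¹ − u₋ (1−α_s) ∫_{θ_s}^∞ G_s⁰ + u₊ α_s Ψ_s¹(θ_s) − u₋ (1−α_s)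 Ψ_s⁰(θ_s)], and continuously differentiable constraint functions C_a, C_b with C_s'(θ) ≠ 0. If (θ̂_a, θ̂_b) is an interior local maximizer of Û subject to the constraint C_a(θ_a) = C_b(θ_b), then Σ_s n_s · [−u₊ α_s (C_{M,s} G_s¹(o_{M,s}(θ̂_s)) + ∫_{o_{M,s}(θ̂_s)}^{θ̂_s} G_s¹(z) τ_{M,s}(θ̂_s − z) dz) + u₋ (1−α_s)(C_{M,s} G_s⁰(o_{M,s}(θ̂_s)) + ∫_{o_{M,s}(θ̂_s)}^{θ̂_s} G_s⁰(z) τ_{M,s}(θ̂_s − z) dz)] / C_s'(θ̂_s) = 0. -/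
noncomputable section

open Set MeasureTheory intervalIntegral

open Filter Topology Metric

/-- Derivative of the upper-tail integral. -/
lemma hasDerivAt_int_Ioi (G : ℝ → ℝ) (hGc : Continuous G) (hGi : Integrable G) (θ : ℝ) :
    HasDerivAt (fun t => ∫ x in Ioi t, G x) (-G θ) θ := by
  have key : (fun t : ℝ => ∫ x in Ioi t, G x)
      = fun t => ((∫ x, G x) - ∫ x in Iic (0:ℝ), G x) - ∫ x in (0:ℝ)..t, G x := by
    funext t
    have h1 : (∫ x in Iic t, G x) + ∫ x in Ioi t, G x = ∫ x, G x :=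
      integral_Iic_add_Ioi hGi.integrableOn hGi.integrableOn
    have h2 : (∫ x in Iic t, G x) - ∫ x in Iic (0:ℝ), G x = ∫ x in (0:ℝ)..t, G x :=
      integral_Iic_sub_Iic hGi.integrableOn hGi.integrableOn
    linarith
  rw [key]
  exact HasDerivAt.const_sub _ (intervalIntegral.integral_hasDerivAt_right
    hGi.intervalIntegrable (hGc.stronglyMeasurableAtFilter _ _) hGc.continuousAt)

/-- Derivative of the Type-3 manipulation impact functional (with a general shift `c`). -/
lemma psi_hasDerivAt (G T τ : ℝ → ℝ) (CM c : ℝ)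
    (hGc : Continuous G) (hτc : Continuous τ) (hT' : ∀ b, HasDerivAt T (τ b) b)
    (hT0 : T 0 = 0) (hTc : T c = 1 - CM) (θ : ℝ) :
    HasDerivAt (fun t => ∫ z in (t - c)..t, G z * (1 - T (t - z)))
      (G θ - CM * G (θ - c) - ∫ z in (θ - c)..θ, G z * τ (θ - z)) θ := by
  set Gh : ℝ → ℝ := fun x => ∫ z in (0:ℝ)..x, G z with hGh_def
  have hGh : ∀ x : ℝ, HasDerivAt Gh (G x) x := fun x =>
    intervalIntegral.integral_hasDerivAt_right (hGc.intervalIntegrable _ _)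
      (hGc.stronglyMeasurableAtFilter _ _) hGc.continuousAt
  have hGhc : Continuous Gh := continuous_iff_continuousAt.2 fun x => (hGh x).continuousAt
  have key : (fun t : ℝ => ∫ z in (t - c)..t, G z * (1 - T (t - z)))
      = fun t => Gh t - CM * Gh (t - c) - ∫ u in (0:ℝ)..c, Gh (t - u) * τ u := by
    funext t
    have h1 : (∫ z in (t - c)..t, G z * (1 - T (t - z)))
        = ∫ u in (0:ℝ)..c, G (t - u) * (1 - T u) := by
      have h := intervalIntegral.integral_comp_sub_left (a := (0:ℝ)) (b := c)
        (fun z => G z * (1 - T (t - z))) t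
      simp only [sub_sub_cancel, sub_zero] at h
      rw [← h]
    have h2 := intervalIntegral.integral_mul_deriv_eq_deriv_mul (a := (0:ℝ)) (b := c)
      (u := fun x => -Gh (t - x)) (v := fun x => 1 - T x)
      (u' := fun x => G (t - x)) (v' := fun x => -τ x)
      (fun x _ => by
        have h := ((hGh (t - x)).comp x ((hasDerivAt_id x).const_sub t)).neg
        simpa [Function.comp_def, Pi.neg_def] using h)
      (fun x _ => (hT' x).const_sub 1)
      ((hGc.comp (continuous_const.sub continuous_id)).intervalIntegrable _ _)
      ((hτc.neg).intervalIntegrable _ _)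
    have h3 : (∫ x in (0:ℝ)..c, -Gh (t - x) * -τ x) = ∫ x in (0:ℝ)..c, Gh (t - x) * τ x := by
      simp [neg_mul_neg]
    rw [h3] at h2
    simp only [hT0, hTc, sub_zero] at h2
    rw [h1]
    linear_combination h2
  rw [key]
  have hp2 : HasDerivAt (fun t : ℝ => CM * Gh (t - c)) (CM * G (θ - c)) θ := by
    have h := (hGh (θ - c)).comp θ ((hasDerivAt_id θ).sub_const c)
    simpa [Function.comp] using h.const_mul CM
  obtain ⟨M, hM⟩ := (isCompact_Icc (a := θ - 1 - |c|) (b := θ + 1 + |c|)).exists_bound_of_continuousOn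
    hGc.continuousOn
  have hp3 : HasDerivAt (fun t : ℝ => ∫ u in (0:ℝ)..c, Gh (t - u) * τ u)
      (∫ u in (0:ℝ)..c, G (θ - u) * τ u) θ := by
    have h := intervalIntegral.hasDerivAt_integral_of_dominated_loc_of_deriv_le
      (F := fun (x : ℝ) (u : ℝ) => Gh (x - u) * τ u)
      (F' := fun (x : ℝ) (u : ℝ) => G (x - u) * τ u)
      (a := (0:ℝ)) (b := c) (x₀ := θ) (μ := volume) (bound := fun u => M * |τ u|) (s := ball θ 1) (ball_mem_nhds θ one_pos)
      (Eventually.of_forall fun x =>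
        (((hGhc.comp (continuous_const.sub continuous_id)).mul hτc)).aestronglyMeasurable)
      (((hGhc.comp (continuous_const.sub continuous_id)).mul hτc).intervalIntegrable _ _)
      (((hGc.comp (continuous_const.sub continuous_id)).mul hτc)).aestronglyMeasurable
      ?_ ((continuous_const.mul hτc.abs).intervalIntegrable _ _) ?_
    · exact h.2
    · refine ae_of_all _ fun u hu x hx => ?_
      have h1 : |x - θ| < 1 := by
        have := mem_ball.mp hx
        rwa [Real.dist_eq] at this
      have h2 : |u| ≤ |c| := by
        rcases hu with ⟨hl, hr⟩
        have hmax : max 0 c ≤ |c| := max_le (abs_nonneg c) (le_abs_self c)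
        have hmin : -|c| ≤ min 0 c := le_min (by linarith [abs_nonneg c]) (neg_abs_le c)
        rw [abs_le]
        constructor <;> linarith
      have hxu : x - u ∈ Icc (θ - 1 - |c|) (θ + 1 + |c|) := by
        rcases abs_le.mp h2 with ⟨h2a, h2b⟩
        rcases abs_lt.mp h1 with ⟨h1a, h1b⟩
        constructor <;> [skip; skip] <;> simp only [mem_Icc] at * <;> linarith
      rw [Real.norm_eq_abs, abs_mul]
      have hGb : |G (x - u)| ≤ M := by
        have := hM _ hxu
        rwa [Real.norm_eq_abs] at this
      exact mul_le_mul_of_nonneg_right hGb (abs_nonneg _)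
    · refine ae_of_all _ fun u hu x hx => ?_
      have h := (hGh (x - u)).comp x ((hasDerivAt_id x).sub_const u)
      simpa [Function.comp_def] using h.mul_const (τ u)
  have hchg : (∫ u in (0:ℝ)..c, G (θ - u) * τ u) = ∫ z in (θ - c)..θ, G z * τ (θ - z) := by
    have h := intervalIntegral.integral_comp_sub_left (a := (0:ℝ)) (b := c)
      (fun z => G z * τ (θ - z)) θ
    simp only [sub_sub_cancel, sub_zero] at h
    exact h
  rw [← hchg]
  exact ((hGh θ).sub hp2).sub hp3

/-- First-order condition for the fair strategic firm under Type 3 (manipulation-only)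
best responses (Lemma 5 combined with Lemma 3). -/
theorem fair_strategic_foc_type3
    (up um na nb αa αb CMa CMb : ℝ)
    (G0a G1a G0b G1b TMa τMa TMb τMb Ca Cb Ca' Cb' : ℝ → ℝ)
    (hup : 0 < up) (hum : 0 < um) (hna : 0 < na) (hnb : 0 < nb)
    (hαa : αa ∈ Ioo (0 : ℝ) 1) (hαb : αb ∈ Ioo (0 : ℝ) 1)
    (hCMa : CMa ∈ Ico (0 : ℝ) 1) (hCMb : CMb ∈ Ico (0 : ℝ) 1)
    (hG0ac : Continuous G0a) (hG1ac : Continuous G1a)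
    (hG0bc : Continuous G0b) (hG1bc : Continuous G1b)
    (hG0ann : ∀ x, 0 ≤ G0a x) (hG1ann : ∀ x, 0 ≤ G1a x)
    (hG0bnn : ∀ x, 0 ≤ G0b x) (hG1bnn : ∀ x, 0 ≤ G1b x)
    (hG0ai : Integrable G0a) (hG1ai : Integrable G1a)
    (hG0bi : Integrable G0b) (hG1bi : Integrable G1b)
    (hτMac : Continuous τMa) (hTMa' : ∀ b, HasDerivAt TMa (τMa b) b)
    (hτMbc : Continuous τMb) (hTMb' : ∀ b, HasDerivAt TMb (τMb b) b)
    (hTMa0 : TMa 0 = 0) (hTMb0 : TMb 0 = 0)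
    (hTMainv : TMa (ginv TMa (1 - CMa)) = 1 - CMa)
    (hTMbinv : TMb (ginv TMb (1 - CMb)) = 1 - CMb)
    (hCa : ∀ θ, HasDerivAt Ca (Ca' θ) θ) (hCa'c : Continuous Ca')
    (hCa'0 : ∀ θ, Ca' θ ≠ 0)
    (hCb : ∀ θ, HasDerivAt Cb (Cb' θ) θ) (hCb'c : Continuous Cb')
    (hCb'0 : ∀ θ, Cb' θ ≠ 0)
    (θa θb : ℝ)
    (hoMa : ginv TMa (1 - CMa) < θa) (hoMb : ginv TMb (1 - CMb) < θb)
    (hfeas : Ca θa = Cb θb)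
    (hmax : IsLocalMaxOn
      (fun p : ℝ × ℝ =>
        na * (up * αa * (∫ x in Ioi p.1, G1a x)
              - um * (1 - αa) * (∫ x in Ioi p.1, G0a x)
              + up * αa * PsiT3 G1a TMa CMa p.1
              - um * (1 - αa) * PsiT3 G0a TMa CMa p.1)
        + nb * (up * αb * (∫ x in Ioi p.2, G1b x)
              - um * (1 - αb) * (∫ x in Ioi p.2, G0b x)
              + up * αb * PsiT3 G1b TMb CMb p.2
              - um * (1 - αb) * PsiT3 G0b TMb CMb p.2))
      {p : ℝ × ℝ | Ca p.1 = Cb p.2} (θa, θb)) :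
    na * (-(up * αa) * (CMa * G1a (θa - ginv TMa (1 - CMa))
            + ∫ z in (θa - ginv TMa (1 - CMa))..θa, G1a z * τMa (θa - z))
          + um * (1 - αa) * (CMa * G0a (θa - ginv TMa (1 - CMa))
            + ∫ z in (θa - ginv TMa (1 - CMa))..θa, G0a z * τMa (θa - z))) / Ca' θa
    + nb * (-(up * αb) * (CMb * G1b (θb - ginv TMb (1 - CMb))
            + ∫ z in (θb - ginv TMb (1 - CMb))..θb, G1b z * τMb (θb - z))
          + um * (1 - αb) * (CMb * G0b (θb - ginv TMb (1 - CMb))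
            + ∫ z in (θb - ginv TMb (1 - CMb))..θb, G0b z * τMb (θb - z))) / Cb' θb
    = 0 := by
  -- derivative of the group-a utility
  set Ea : ℝ := -(up * αa) * (CMa * G1a (θa - ginv TMa (1 - CMa))
      + ∫ z in (θa - ginv TMa (1 - CMa))..θa, G1a z * τMa (θa - z))
    + um * (1 - αa) * (CMa * G0a (θa - ginv TMa (1 - CMa))
      + ∫ z in (θa - ginv TMa (1 - CMa))..θa, G0a z * τMa (θa - z)) with hEa_def
  set Eb : ℝ := -(up * αb) * (CMb * G1b (θb - ginv TMb (1 - CMb))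
      + ∫ z in (θb - ginv TMb (1 - CMb))..θb, G1b z * τMb (θb - z))
    + um * (1 - αb) * (CMb * G0b (θb - ginv TMb (1 - CMb))
      + ∫ z in (θb - ginv TMb (1 - CMb))..θb, G0b z * τMb (θb - z)) with hEb_def
  have hUa : HasDerivAt (fun θ : ℝ => up * αa * (∫ x in Ioi θ, G1a x)
      - um * (1 - αa) * (∫ x in Ioi θ, G0a x)
      + up * αa * PsiT3 G1a TMa CMa θ - um * (1 - αa) * PsiT3 G0a TMa CMa θ) Ea θa := by
    have h1 := hasDerivAt_int_Ioi G1a hG1ac hG1ai θa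
    have h0 := hasDerivAt_int_Ioi G0a hG0ac hG0ai θa
    have hp1 := psi_hasDerivAt G1a TMa τMa CMa (ginv TMa (1 - CMa)) hG1ac hτMac hTMa'
      hTMa0 hTMainv θa
    have hp0 := psi_hasDerivAt G0a TMa τMa CMa (ginv TMa (1 - CMa)) hG0ac hτMac hTMa'
      hTMa0 hTMainv θa
    have h := (((h1.const_mul (up * αa)).sub (h0.const_mul (um * (1 - αa)))).add
      (hp1.const_mul (up * αa))).sub (hp0.const_mul (um * (1 - αa)))
    have heq : up * αa * -G1a θa - um * (1 - αa) * -G0a θa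
        + up * αa * (G1a θa - CMa * G1a (θa - ginv TMa (1 - CMa))
          - ∫ z in (θa - ginv TMa (1 - CMa))..θa, G1a z * τMa (θa - z))
        - um * (1 - αa) * (G0a θa - CMa * G0a (θa - ginv TMa (1 - CMa))
          - ∫ z in (θa - ginv TMa (1 - CMa))..θa, G0a z * τMa (θa - z)) = Ea := by
      rw [hEa_def]; ring
    exact heq ▸ h
  have hUb : HasDerivAt (fun θ : ℝ => up * αb * (∫ x in Ioi θ, G1b x)
      - um * (1 - αb) * (∫ x in Ioi θ, G0b x)
      + up * αb * PsiT3 G1b TMb CMb θ - um * (1 - αb) * PsiT3 G0b TMb CMb θ) Eb θb := by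
    have h1 := hasDerivAt_int_Ioi G1b hG1bc hG1bi θb
    have h0 := hasDerivAt_int_Ioi G0b hG0bc hG0bi θb
    have hp1 := psi_hasDerivAt G1b TMb τMb CMb (ginv TMb (1 - CMb)) hG1bc hτMbc hTMb'
      hTMb0 hTMbinv θb
    have hp0 := psi_hasDerivAt G0b TMb τMb CMb (ginv TMb (1 - CMb)) hG0bc hτMbc hTMb'
      hTMb0 hTMbinv θb
    have h := (((h1.const_mul (up * αb)).sub (h0.const_mul (um * (1 - αb)))).add
      (hp1.const_mul (up * αb))).sub (hp0.const_mul (um * (1 - αb)))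
    have heq : up * αb * -G1b θb - um * (1 - αb) * -G0b θb
        + up * αb * (G1b θb - CMb * G1b (θb - ginv TMb (1 - CMb))
          - ∫ z in (θb - ginv TMb (1 - CMb))..θb, G1b z * τMb (θb - z))
        - um * (1 - αb) * (G0b θb - CMb * G0b (θb - ginv TMb (1 - CMb))
          - ∫ z in (θb - ginv TMb (1 - CMb))..θb, G0b z * τMb (θb - z)) = Eb := by
      rw [hEb_def]; ring
    exact heq ▸ h
  -- local inverse of Cb
  have hderivCb : deriv Cb = Cb' := funext fun x => (hCb x).deriv
  have hCb1 : ContDiff ℝ 1 Cb := contDiff_one_iff_deriv.mpr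
    ⟨fun x => (hCb x).differentiableAt, hderivCb ▸ hCb'c⟩
  have hCbs : HasStrictDerivAt Cb (Cb' θb) θb := by
    have h : HasStrictDerivAt Cb (deriv Cb θb) θb := hCb1.contDiffAt.hasStrictDerivAt one_ne_zero
    rwa [hderivCb] at h
  set I : ℝ → ℝ := hCbs.localInverse Cb (Cb' θb) θb (hCb'0 θb) with hIdef
  have hIs : HasStrictDerivAt I (Cb' θb)⁻¹ (Cb θb) := hCbs.to_localInverse (hCb'0 θb)
  have hleft : ∀ᶠ x in 𝓝 θb, I (Cb x) = x :=
    (hCbs.hasStrictFDerivAt_equiv (hCb'0 θb)).eventually_left_inverse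
  have hright : ∀ᶠ y in 𝓝 (Cb θb), Cb (I y) = y :=
    (hCbs.hasStrictFDerivAt_equiv (hCb'0 θb)).eventually_right_inverse
  have hφ0 : I (Ca (θa + 0)) = θb := by
    rw [add_zero, hfeas]; exact hleft.self_of_nhds
  have hshift : HasDerivAt (fun t : ℝ => θa + t) 1 (0:ℝ) := (hasDerivAt_id 0).const_add θa
  have hCashift : HasDerivAt (fun t : ℝ => Ca (θa + t)) (Ca' θa) 0 := by
    have h := (hCa (θa + 0)).comp 0 hshift
    simpa [Function.comp_def] using h
  have hφd : HasDerivAt (fun t : ℝ => I (Ca (θa + t))) ((Cb' θb)⁻¹ * Ca' θa) 0 := by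
    have hIt : HasDerivAt I (Cb' θb)⁻¹ (Ca (θa + 0)) := by
      rw [add_zero, hfeas]; exact hIs.hasDerivAt
    have h := hIt.comp 0 hCashift
    simpa [Function.comp_def] using h
  have hmem : ∀ᶠ t in 𝓝 (0:ℝ), Ca (θa + t) = Cb (I (Ca (θa + t))) := by
    have hten : Tendsto (fun t : ℝ => Ca (θa + t)) (𝓝 0) (𝓝 (Cb θb)) := by
      have h := hCashift.continuousAt.tendsto
      rwa [add_zero, hfeas] at h
    filter_upwards [hten.eventually hright] with t ht
    exact ht.symm
  have hγ : Tendsto (fun t : ℝ => ((θa + t, I (Ca (θa + t))) : ℝ × ℝ)) (𝓝 0)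
      (𝓝[{p : ℝ × ℝ | Ca p.1 = Cb p.2}] (θa, θb)) := by
    rw [tendsto_nhdsWithin_iff]
    refine ⟨Tendsto.prodMk_nhds ?_ ?_, ?_⟩
    · have h : Tendsto (fun t : ℝ => θa + t) (𝓝 0) (𝓝 (θa + 0)) :=
        ((continuous_const.add continuous_id).tendsto (0:ℝ))
      simpa using h
    · have h := hφd.continuousAt.tendsto
      rwa [hφ0] at h
    · filter_upwards [hmem] with t ht
      exact ht
  have hγ0 : ((θa + 0, I (Ca (θa + 0))) : ℝ × ℝ) = (θa, θb) := by
    rw [Prod.mk.injEq]; exact ⟨add_zero θa, hφ0⟩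
  have hmax2 : IsMaxFilter
      (fun p : ℝ × ℝ =>
        na * (up * αa * (∫ x in Ioi p.1, G1a x)
              - um * (1 - αa) * (∫ x in Ioi p.1, G0a x)
              + up * αa * PsiT3 G1a TMa CMa p.1
              - um * (1 - αa) * PsiT3 G0a TMa CMa p.1)
        + nb * (up * αb * (∫ x in Ioi p.2, G1b x)
              - um * (1 - αb) * (∫ x in Ioi p.2, G0b x)
              + up * αb * PsiT3 G1b TMb CMb p.2
              - um * (1 - αb) * PsiT3 G0b TMb CMb p.2))
      (𝓝[{p : ℝ × ℝ | Ca p.1 = Cb p.2}] (θa, θb)) ((θa + 0, I (Ca (θa + 0))) : ℝ × ℝ) := by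
    rw [hγ0]; exact hmax
  have hlm : IsLocalMax ((fun p : ℝ × ℝ =>
        na * (up * αa * (∫ x in Ioi p.1, G1a x)
              - um * (1 - αa) * (∫ x in Ioi p.1, G0a x)
              + up * αa * PsiT3 G1a TMa CMa p.1
              - um * (1 - αa) * PsiT3 G0a TMa CMa p.1)
        + nb * (up * αb * (∫ x in Ioi p.2, G1b x)
              - um * (1 - αb) * (∫ x in Ioi p.2, G0b x)
              + up * αb * PsiT3 G1b TMb CMb p.2
              - um * (1 - αb) * PsiT3 G0b TMb CMb p.2))
      ∘ fun t : ℝ => ((θa + t, I (Ca (θa + t))) : ℝ × ℝ)) 0 :=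
    IsMaxFilter.comp_tendsto (g := fun t : ℝ => ((θa + t, I (Ca (θa + t))) : ℝ × ℝ)) hmax2 hγ
  have hcomp : HasDerivAt ((fun p : ℝ × ℝ =>
        na * (up * αa * (∫ x in Ioi p.1, G1a x)
              - um * (1 - αa) * (∫ x in Ioi p.1, G0a x)
              + up * αa * PsiT3 G1a TMa CMa p.1
              - um * (1 - αa) * PsiT3 G0a TMa CMa p.1)
        + nb * (up * αb * (∫ x in Ioi p.2, G1b x)
              - um * (1 - αb) * (∫ x in Ioi p.2, G0b x)
              + up * αb * PsiT3 G1b TMb CMb p.2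
              - um * (1 - αb) * PsiT3 G0b TMb CMb p.2))
      ∘ fun t : ℝ => ((θa + t, I (Ca (θa + t))) : ℝ × ℝ))
      (na * Ea + nb * (Eb * ((Cb' θb)⁻¹ * Ca' θa))) 0 := by
    have h1 : HasDerivAt (fun t : ℝ => up * αa * (∫ x in Ioi (θa + t), G1a x)
        - um * (1 - αa) * (∫ x in Ioi (θa + t), G0a x)
        + up * αa * PsiT3 G1a TMa CMa (θa + t)
        - um * (1 - αa) * PsiT3 G0a TMa CMa (θa + t)) Ea 0 := by
      have hUa' : HasDerivAt (fun θ : ℝ => up * αa * (∫ x in Ioi θ, G1a x)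
          - um * (1 - αa) * (∫ x in Ioi θ, G0a x)
          + up * αa * PsiT3 G1a TMa CMa θ - um * (1 - αa) * PsiT3 G0a TMa CMa θ)
          Ea (θa + 0) := by
        rw [add_zero]; exact hUa
      have h := hUa'.comp 0 hshift
      simpa [Function.comp_def] using h
    have h2 : HasDerivAt (fun t : ℝ => up * αb * (∫ x in Ioi (I (Ca (θa + t))), G1b x)
        - um * (1 - αb) * (∫ x in Ioi (I (Ca (θa + t))), G0b x)
        + up * αb * PsiT3 G1b TMb CMb (I (Ca (θa + t)))
        - um * (1 - αb) * PsiT3 G0b TMb CMb (I (Ca (θa + t))))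
        (Eb * ((Cb' θb)⁻¹ * Ca' θa)) 0 := by
      have hUb' : HasDerivAt (fun θ : ℝ => up * αb * (∫ x in Ioi θ, G1b x)
          - um * (1 - αb) * (∫ x in Ioi θ, G0b x)
          + up * αb * PsiT3 G1b TMb CMb θ - um * (1 - αb) * PsiT3 G0b TMb CMb θ)
          Eb (I (Ca (θa + 0))) := by
        rw [hφ0]; exact hUb
      have h := hUb'.comp 0 hφd
      simpa [Function.comp_def] using h
    exact (h1.const_mul na).add (h2.const_mul nb)
  have heq0 : na * Ea + nb * (Eb * ((Cb' θb)⁻¹ * Ca' θa)) = 0 :=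
    hlm.hasDerivAt_eq_zero hcomp
  have hca := hCa'0 θa
  have hcb := hCb'0 θb
  field_simp at heq0 ⊢
  linear_combination heq0

end
end

section
/- Suppose each feature density G^y is supported on a bounded interval [x̲^y, x̄^y] with x̲⁰ ≤ μ⁰ < x̲¹ < x̄⁰ < μ¹ ≤ x̄¹ (where μ^y is the mean of G^y), and G^y > 0 on the interior of its support. Then every global maximizer θ* of U satisfies x̲¹ ≤ θ* ≤ x̄⁰. -/
noncomputable section

open Set MeasureTheory

lemma splitIoi (f : ℝ → ℝ) (hf : Integrable f) {a b : ℝ} (hab : a ≤ b) :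
    ∫ x in Ioi a, f x = (∫ x in Ioc a b, f x) + ∫ x in Ioi b, f x := by
  rw [← Ioc_union_Ioi_eq_Ioi hab]
  exact setIntegral_union (Ioc_disjoint_Ioi le_rfl) measurableSet_Ioi
    hf.integrableOn hf.integrableOn

lemma posIoc {f : ℝ → ℝ} (hf : Continuous f)
    {c d : ℝ} (hcd : c < d) (hpos : ∀ x ∈ Ioo c d, 0 < f x) :
    0 < ∫ x in Ioc c d, f x := by
  have h := intervalIntegral.intervalIntegral_pos_of_pos_on
    (hf.intervalIntegrable c d) hpos hcd
  rwa [intervalIntegral.integral_of_le hcd.le] at h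

lemma zeroIoc {f : ℝ → ℝ} {c d : ℝ} (h : ∀ x ∈ Ioc c d, f x = 0) :
    ∫ x in Ioc c d, f x = 0 := by
  rw [setIntegral_congr_fun measurableSet_Ioc h]
  simp

lemma limzero {f : ℝ → ℝ} (hf : Continuous f) {c : ℝ} (h : ∀ x < c, f x = 0) :
    f c = 0 := by
  have h1 : Filter.Tendsto f (nhdsWithin c (Iio c)) (nhds (f c)) :=
    (hf.tendsto c).mono_left nhdsWithin_le_nhds
  have h2 : Filter.Tendsto f (nhdsWithin c (Iio c)) (nhds 0) := by
    refine Filter.Tendsto.congr' ?_ tendsto_const_nhds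
    exact Filter.eventually_of_mem self_mem_nhdsWithin (fun x hx => (h x hx).symm)
  exact tendsto_nhds_unique h1 h2

lemma limzero' {f : ℝ → ℝ} (hf : Continuous f) {c : ℝ} (h : ∀ x, c < x → f x = 0) :
    f c = 0 := by
  have h1 : Filter.Tendsto f (nhdsWithin c (Ioi c)) (nhds (f c)) :=
    (hf.tendsto c).mono_left nhdsWithin_le_nhds
  have h2 : Filter.Tendsto f (nhdsWithin c (Ioi c)) (nhds 0) := by
    refine Filter.Tendsto.congr' ?_ tendsto_const_nhds
    exact Filter.eventually_of_mem self_mem_nhdsWithin (fun x hx => (h x hx).symm)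
  exact tendsto_nhds_unique h1 h2

/-- With bounded overlapping supports `[x̲⁰, x̄⁰]` and `[x̲¹, x̄¹]` satisfying
`x̲⁰ ≤ μ⁰ < x̲¹ < x̄⁰ < μ¹ ≤ x̄¹`, every global maximizer of the non-strategic utility
lies in `[x̲¹, x̄⁰]`. -/
theorem nonstrategic_optimum_location
    (up um α : ℝ) (G0 G1 : ℝ → ℝ)
    (μ0 μ1 x0lo x0hi x1lo x1hi : ℝ)
    (hup : 0 < up) (hum : 0 < um) (hα : α ∈ Ioo (0 : ℝ) 1)
    (hG0c : Continuous G0) (hG1c : Continuous G1)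
    (hG0nn : ∀ x, 0 ≤ G0 x) (hG1nn : ∀ x, 0 ≤ G1 x)
    (hG0tot : ∫ x, G0 x = 1) (hG1tot : ∫ x, G1 x = 1)
    (hG0supp : ∀ x, x ∉ Icc x0lo x0hi → G0 x = 0)
    (hG1supp : ∀ x, x ∉ Icc x1lo x1hi → G1 x = 0)
    (hG0pos : ∀ x ∈ Ioo x0lo x0hi, 0 < G0 x)
    (hG1pos : ∀ x ∈ Ioo x1lo x1hi, 0 < G1 x)
    (hμ0 : μ0 = ∫ x, x * G0 x) (hμ1 : μ1 = ∫ x, x * G1 x)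
    (ho1 : x0lo ≤ μ0) (ho2 : μ0 < x1lo) (ho3 : x1lo < x0hi)
    (ho4 : x0hi < μ1) (ho5 : μ1 ≤ x1hi)
    (θs : ℝ)
    (hθs : ∀ t, firmU up um α G0 G1 t ≤ firmU up um α G0 G1 θs) :
    x1lo ≤ θs ∧ θs ≤ x0hi := by
  have hint0 : Integrable G0 :=
    hG0c.integrable_of_hasCompactSupport (HasCompactSupport.intro isCompact_Icc hG0supp)
  have hint1 : Integrable G1 :=
    hG1c.integrable_of_hasCompactSupport (HasCompactSupport.intro isCompact_Icc hG1supp)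
  have hlo : x0lo < x1lo := lt_of_le_of_lt ho1 ho2
  have hhi : x0hi < x1hi := lt_of_lt_of_le ho4 ho5
  have hG1zero : ∀ x ≤ x1lo, G1 x = 0 := by
    intro x hx
    rcases lt_or_eq_of_le hx with hx | hx
    · exact hG1supp x (fun hm => absurd hm.1 (not_le.2 hx))
    · subst hx
      exact limzero hG1c (fun y hy => hG1supp y (fun hm => absurd hm.1 (not_le.2 hy)))
  have hG0zero : ∀ x, x0hi ≤ x → G0 x = 0 := by
    intro x hx
    rcases lt_or_eq_of_le hx with hx | hx
    · exact hG0supp x (fun hm => absurd hm.2 (not_le.2 hx))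
    · subst hx
      exact limzero' hG0c (fun y hy => hG0supp y (fun hm => absurd hm.2 (not_le.2 hy)))
  have hposα : 0 < up * α := mul_pos hup hα.1
  have hposum : 0 < um * (1 - α) := mul_pos hum (sub_pos.2 hα.2)
  constructor
  · by_contra h
    push_neg at h
    have key := hθs x1lo
    have s1 := splitIoi G1 hint1 h.le
    have s0 := splitIoi G0 hint0 h.le
    have z1 : ∫ x in Ioc θs x1lo, G1 x = 0 :=
      zeroIoc (fun x hx => hG1zero x hx.2)
    have p0 : 0 < ∫ x in Ioc θs x1lo, G0 x := by
      have hc : max θs x0lo < x1lo := max_lt h hlo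
      have hsub : 0 < ∫ x in Ioc (max θs x0lo) x1lo, G0 x :=
        posIoc hG0c hc (fun x hx =>
          hG0pos x ⟨lt_of_le_of_lt (le_max_right _ _) hx.1, hx.2.trans ho3⟩)
      refine lt_of_lt_of_le hsub ?_
      refine setIntegral_mono_set hint0.integrableOn ?_ ?_
      · exact Filter.Eventually.of_forall (fun x => hG0nn x)
      · exact (Ioc_subset_Ioc (le_max_left _ _) le_rfl).eventuallyLE
    simp only [firmU] at key
    rw [s1, s0, z1] at key
    nlinarith
  · by_contra h
    push_neg at h
    have key := hθs x0hi
    have s1 := splitIoi G1 hint1 h.le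
    have s0 := splitIoi G0 hint0 h.le
    have z0 : ∫ x in Ioc x0hi θs, G0 x = 0 :=
      zeroIoc (fun x hx => hG0zero x hx.1.le)
    have p1 : 0 < ∫ x in Ioc x0hi θs, G1 x := by
      have hc : x0hi < min θs x1hi := lt_min h hhi
      have hsub : 0 < ∫ x in Ioc x0hi (min θs x1hi), G1 x :=
        posIoc hG1c hc (fun x hx =>
          hG1pos x ⟨ho3.trans hx.1, lt_of_lt_of_le hx.2 (min_le_right _ _)⟩)
      refine lt_of_lt_of_le hsub ?_
      refine setIntegral_mono_set hint1.integrableOn ?_ ?_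
      · exact Filter.Eventually.of_forall (fun x => hG1nn x)
      · exact (Ioc_subset_Ioc le_rfl (min_le_left _ _)).eventuallyLE
    simp only [firmU] at key
    rw [s1, s0, z0] at key
    nlinarith
end
end
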